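/- arXiv:2311.08600 — 2 statements merged into one kernel-verified Lean document; each statement's English description precedes it below -/
import Mathlib

section
/- The functions φ_1, φ_2, …, φ_m are linearly independent over ℝ as functions of a real variable: if α_1, …, α_m ∈ ℝ satisfy Σ_{k=1}^m α_k φ_k(z) = 0 for all z ∈ ℝ, then α_1 = ⋯ = α_m = 0. -/
noncomputable def phi (k : ℕ) (z : ℝ) : ℝ :=
  ∫ θ in (0:ℝ)..1, Real.exp ((1 - θ) * z) * θ ^ (k - 1) / (Nat.factorial (k - 1))

open MeasureTheory Real Filter Set Topology

lemma phi_scaled (j : ℕ) (hj : 1 ≤ j) (z : ℝ) (hz : 0 < z) :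
    z ^ j * Real.exp (-z) * phi j z
      = ∫ u in (0:ℝ)..z, Real.exp (-u) * u ^ (j - 1) / (Nat.factorial (j - 1)) := by
  have hz' : z ≠ 0 := hz.ne'
  have key := intervalIntegral.integral_comp_mul_right
    (fun u => Real.exp (-u) * u ^ (j - 1) / (Nat.factorial (j - 1))) hz' (a := 0) (b := 1)
  rw [zero_mul, one_mul] at key
  have key2 : (∫ u in (0:ℝ)..z, Real.exp (-u) * u ^ (j - 1) / (Nat.factorial (j - 1)))
      = z * ∫ θ in (0:ℝ)..1,
          Real.exp (-(θ * z)) * (θ * z) ^ (j - 1) / (Nat.factorial (j - 1)) := by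
    rw [key, smul_eq_mul, ← mul_assoc, mul_inv_cancel₀ hz', one_mul]
  rw [key2, phi, ← intervalIntegral.integral_const_mul, ← intervalIntegral.integral_const_mul]
  refine intervalIntegral.integral_congr (fun θ _ => ?_)
  have hexp : Real.exp ((1 - θ) * z) = Real.exp (-(θ * z)) * Real.exp z := by
    rw [← Real.exp_add]; ring_nf
  have hzj : z ^ j = z * z ^ (j - 1) := by
    rw [← pow_succ']; congr 1; omega
  rw [hexp, mul_pow, hzj, Real.exp_neg]
  have := Real.exp_ne_zero z
  field_simp

lemma tendsto_phi_self (j : ℕ) (hj : 1 ≤ j) :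
    Tendsto (fun z => z ^ j * Real.exp (-z) * phi j z) atTop (𝓝 1) := by
  have hcast : ((j : ℝ) - 1) = ((j - 1 : ℕ) : ℝ) := by
    have : (1:ℕ) ≤ j := hj
    push_cast [this]; ring
  have heq : ∀ x ∈ Ioi (0:ℝ),
      Real.exp (-x) * x ^ ((j:ℝ) - 1) = Real.exp (-x) * x ^ (j - 1 : ℕ) := by
    intro x hx
    rw [hcast, Real.rpow_natCast]
  have hint0 : IntegrableOn (fun x : ℝ => Real.exp (-x) * x ^ ((j:ℝ) - 1)) (Ioi 0) :=
    Real.GammaIntegral_convergent (by exact_mod_cast hj.trans_lt' zero_lt_one)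
  have hint : IntegrableOn
      (fun u : ℝ => Real.exp (-u) * u ^ (j - 1) / (Nat.factorial (j - 1))) (Ioi 0) := by
    exact (hint0.congr_fun heq measurableSet_Ioi).div_const _
  have hval : (∫ u in Ioi (0:ℝ),
      Real.exp (-u) * u ^ (j - 1) / (Nat.factorial (j - 1))) = 1 := by
    rw [MeasureTheory.integral_div]
    have : (∫ u in Ioi (0:ℝ), Real.exp (-u) * u ^ (j - 1 : ℕ))
        = ∫ u in Ioi (0:ℝ), Real.exp (-u) * u ^ ((j:ℝ) - 1) :=
      (setIntegral_congr_fun measurableSet_Ioi (fun x hx => (heq x hx).symm))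
    rw [this, ← Real.Gamma_eq_integral (by exact_mod_cast hj.trans_lt' zero_lt_one)]
    have hg : Real.Gamma (j : ℝ) = Nat.factorial (j - 1) := by
      have := Real.Gamma_nat_eq_factorial (j - 1)
      rw [show (((j - 1 : ℕ) : ℝ) + 1) = (j : ℝ) by push_cast [hj]; ring] at this
      exact this
    rw [hg, div_self (by positivity)]
  have := MeasureTheory.intervalIntegral_tendsto_integral_Ioi 0 hint tendsto_id
  rw [hval] at this
  refine this.congr' ?_
  filter_upwards [eventually_gt_atTop (0:ℝ)] with z hz
  exact (phi_scaled j hj z hz).symm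

lemma tendsto_phi_lt (j k : ℕ) (hj : 1 ≤ j) (hk : k < j) :
    Tendsto (fun z => z ^ k * Real.exp (-z) * phi j z) atTop (𝓝 0) := by
  have h1 : Tendsto (fun z : ℝ => (z ^ (j - k))⁻¹) atTop (𝓝 0) :=
    (tendsto_pow_atTop (by omega)).inv_tendsto_atTop
  have h2 := tendsto_phi_self j hj
  have := h1.mul h2
  rw [zero_mul] at this
  refine this.congr' ?_
  filter_upwards [eventually_gt_atTop (0:ℝ)] with z hz
  have hzj : z ^ j = z ^ (j - k) * z ^ k := by
    rw [← pow_add]; congr 1; omega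
  rw [hzj]
  field_simp

theorem phi_linearly_independent (m : ℕ) (α : ℕ → ℝ)
    (h : ∀ z : ℝ, ∑ k ∈ Finset.Icc 1 m, α k * phi k z = 0) :
    ∀ k ∈ Finset.Icc 1 m, α k = 0 := by
  intro k hk
  induction k using Nat.strong_induction_on with
  | _ k IH =>
  rw [Finset.mem_Icc] at hk
  obtain ⟨hk1, hkm⟩ := hk
  -- sum over Icc k m vanishes
  have hsplit : ∀ z : ℝ, ∑ j ∈ Finset.Icc k m, α j * phi j z = 0 := by
    intro z
    have hz := h z
    have : Finset.Icc 1 m = Finset.Ioc 0 m := by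
      ext x; simp [Nat.lt_iff_add_one_le]
    rw [this] at hz
    rw [show Finset.Icc k m = Finset.Ioc (k-1) m by
      ext x; rw [Finset.mem_Icc, Finset.mem_Ioc]; omega]
    have hsum := Finset.sum_Ioc_consecutive (fun j => α j * phi j z)
      (show 0 ≤ k - 1 by omega) (show k - 1 ≤ m by omega)
    have hzero : ∑ j ∈ Finset.Ioc 0 (k-1), α j * phi j z = 0 := by
      apply Finset.sum_eq_zero
      intro j hj
      rw [Finset.mem_Ioc] at hj
      rw [IH j (by omega) (Finset.mem_Icc.mpr ⟨by omega, by omega⟩), zero_mul]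
    rw [← hsum, hzero, zero_add] at hz
    exact hz
  have hlim : Tendsto (fun z => ∑ j ∈ Finset.Icc k m, α j * (z ^ k * Real.exp (-z) * phi j z))
      atTop (𝓝 (∑ j ∈ Finset.Icc k m, α j * (if j = k then 1 else 0))) := by
    refine tendsto_finset_sum _ (fun j hj => ?_)
    rw [Finset.mem_Icc] at hj
    rcases eq_or_lt_of_le hj.1 with heq | hlt
    · subst heq
      simp only [if_pos rfl]
      exact (tendsto_phi_self k (by omega)).const_mul _
    · rw [if_neg (by omega)]
      rw [show (α j * 0 : ℝ) = α j * 0 from rfl, mul_zero]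
      have := (tendsto_phi_lt j k (by omega) hlt).const_mul (α j)
      rwa [mul_zero] at this
  have hfun : (fun z => ∑ j ∈ Finset.Icc k m, α j * (z ^ k * Real.exp (-z) * phi j z))
      = fun _ => (0:ℝ) := by
    funext z
    have : ∑ j ∈ Finset.Icc k m, α j * (z ^ k * Real.exp (-z) * phi j z)
        = z ^ k * Real.exp (-z) * ∑ j ∈ Finset.Icc k m, α j * phi j z := by
      rw [Finset.mul_sum]; congr 1; funext j; ring
    rw [this, hsplit z, mul_zero]
  rw [hfun] at hlim
  have hsum : (∑ j ∈ Finset.Icc k m, α j * (if j = k then 1 else 0)) = α k := by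
    rw [Finset.sum_eq_single k]
    · simp
    · intro j _ hjk; rw [if_neg hjk, mul_zero]
    · intro hnk; exact absurd (Finset.mem_Icc.mpr ⟨le_refl k, hkm⟩) hnk
  rw [hsum] at hlim
  exact (tendsto_nhds_unique tendsto_const_nhds hlim).symm
end

section
/- Let c₁, c₂, c₃, c₄ be distinct nonzero reals and fix z ∈ ℝ. Define, for each i ∈ {1,2,3,4} with {j,k,l} = {1,2,3,4}\{i}, b_i = [−c_j c_k c_l φ_2(z) + 2(c_j c_k + c_j c_l + c_k c_l) φ_3(z) − 6(c_j + c_k + c_l) φ_4(z) + 24 φ_5(z)] / [c_i (c_i − c_j)(c_i − c_k)(c_i − c_l)]. Then Σ_{i=1}^{4} b_i c_i^{q−1}/(q−1)! = φ_q(z) for q = 2, 3, 4, 5. -/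
set_option maxHeartbeats 8000000


/-- The weight formula (4.3): for node `ci` with complementary nodes `cj, ck, cl`. -/
noncomputable def weight (z ci cj ck cl : ℝ) : ℝ :=
  (-(cj * ck * cl) * phi 2 z + 2 * (cj * ck + cj * cl + ck * cl) * phi 3 z
    - 6 * (cj + ck + cl) * phi 4 z + 24 * phi 5 z) /
  (ci * (ci - cj) * (ci - ck) * (ci - cl))

theorem weights_solve_order_conditions (z c1 c2 c3 c4 : ℝ)
    (hc1 : c1 ≠ 0) (hc2 : c2 ≠ 0) (hc3 : c3 ≠ 0) (hc4 : c4 ≠ 0)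
    (h12 : c1 ≠ c2) (h13 : c1 ≠ c3) (h14 : c1 ≠ c4)
    (h23 : c2 ≠ c3) (h24 : c2 ≠ c4) (h34 : c3 ≠ c4) :
    ∀ q ∈ ({2, 3, 4, 5} : Finset ℕ),
      weight z c1 c2 c3 c4 * c1 ^ (q - 1) / (Nat.factorial (q - 1))
      + weight z c2 c1 c3 c4 * c2 ^ (q - 1) / (Nat.factorial (q - 1))
      + weight z c3 c1 c2 c4 * c3 ^ (q - 1) / (Nat.factorial (q - 1))
      + weight z c4 c1 c2 c3 * c4 ^ (q - 1) / (Nat.factorial (q - 1))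
      = phi q z := by
  have d12 := sub_ne_zero.mpr h12
  have d13 := sub_ne_zero.mpr h13
  have d14 := sub_ne_zero.mpr h14
  have d23 := sub_ne_zero.mpr h23
  have d24 := sub_ne_zero.mpr h24
  have d34 := sub_ne_zero.mpr h34
  have d21 := sub_ne_zero.mpr h12.symm
  have d31 := sub_ne_zero.mpr h13.symm
  have d41 := sub_ne_zero.mpr h14.symm
  have d32 := sub_ne_zero.mpr h23.symm
  have d42 := sub_ne_zero.mpr h24.symm
  have d43 := sub_ne_zero.mpr h34.symm
  intro q hq
  simp only [weight]
  set p2 := phi 2 z with hp2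
  set p3 := phi 3 z with hp3
  set p4 := phi 4 z with hp4
  set p5 := phi 5 z with hp5
  fin_cases hq <;>
  · norm_num [Nat.factorial]
    field_simp
    ring
end
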